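/- Let (Ω, F, P) be a probability space and W : Ω → [0, ∞) a measurable function, and let z₀ > 0. Then ∫_0^{z₀} z^{-1} ∫_Ω (1 - e^{-z W(ω)}) dP(ω) dz < ∞ if and only if ∫_Ω log(1 + W) dP < ∞. -/

import Mathlib

open MeasureTheory Real

lemma aux_le_one_sub_exp (u : ℝ) (hu : 0 ≤ u) : u / (1+u) ≤ 1 - Real.exp (-u) := by
  have hpos : (0:ℝ) < 1 + u := by linarith
  have h1 : Real.exp (-u) ≤ (1+u)⁻¹ := by
    rw [Real.exp_neg]
    exact inv_anti₀ hpos (by linarith [Real.add_one_le_exp u])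
  have h2 : u / (1+u) = 1 - (1+u)⁻¹ := by field_simp; ring
  linarith

lemma aux_one_sub_exp_le (u : ℝ) (hu : 0 ≤ u) : (1+u) * (1 - Real.exp (-u)) ≤ 2*u := by
  rcases le_or_gt u 1 with h | h
  · nlinarith [Real.add_one_le_exp (-u), Real.exp_nonneg (-u)]
  · nlinarith [Real.exp_nonneg (-u), mul_nonneg (Real.exp_nonneg (-u)) hu]

lemma aux_sandwich_lo (z w : ℝ) (hz : 0 < z) (hw : 0 ≤ w) :
    w / (1 + z*w) ≤ z⁻¹ * (1 - Real.exp (-(z*w))) := by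
  have hu : 0 ≤ z*w := mul_nonneg hz.le hw
  have hpos : (0:ℝ) < 1 + z*w := by linarith
  have key := aux_le_one_sub_exp (z*w) hu
  have heq : z⁻¹ * (z*w / (1 + z*w)) = w / (1 + z*w) := by
    field_simp
  calc w / (1 + z*w) = z⁻¹ * (z*w / (1 + z*w)) := heq.symm
    _ ≤ z⁻¹ * (1 - Real.exp (-(z*w))) :=
        mul_le_mul_of_nonneg_left key (inv_nonneg.2 hz.le)

lemma aux_sandwich_hi (z w : ℝ) (hz : 0 < z) (hw : 0 ≤ w) :
    z⁻¹ * (1 - Real.exp (-(z*w))) ≤ 2 * (w / (1 + z*w)) := by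
  have hu : 0 ≤ z*w := mul_nonneg hz.le hw
  have hpos : (0:ℝ) < 1 + z*w := by linarith
  have key := aux_one_sub_exp_le (z*w) hu
  have h1 : 1 - Real.exp (-(z*w)) ≤ 2*(z*w) / (1 + z*w) :=
    (le_div_iff₀ hpos).2 (by linarith [key])
  have heq : z⁻¹ * (2*(z*w) / (1 + z*w)) = 2 * (w / (1 + z*w)) := by
    field_simp
  calc z⁻¹ * (1 - Real.exp (-(z*w))) ≤ z⁻¹ * (2*(z*w) / (1 + z*w)) :=
        mul_le_mul_of_nonneg_left h1 (inv_nonneg.2 hz.le)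
    _ = 2 * (w / (1 + z*w)) := heq

lemma aux_inner_lo (z₀ w : ℝ) (_hz₀ : 0 < z₀) (hw : 0 ≤ w)
    (heq : ∫⁻ z in Set.Ioo 0 z₀, ENNReal.ofReal (w / (1 + z*w)) =
      ENNReal.ofReal (Real.log (1 + z₀*w))) :
    ENNReal.ofReal (Real.log (1 + z₀*w)) ≤
      ∫⁻ z in Set.Ioo 0 z₀, ENNReal.ofReal z⁻¹ * ENNReal.ofReal (1 - Real.exp (-(z*w))) := by
  rw [← heq]
  refine lintegral_mono_ae ((ae_restrict_iff' measurableSet_Ioo).2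
    (Filter.Eventually.of_forall fun z hz => ?_))
  rw [← ENNReal.ofReal_mul (inv_nonneg.2 hz.1.le)]
  exact ENNReal.ofReal_le_ofReal (aux_sandwich_lo z w hz.1 hw)

lemma aux_inner_hi (z₀ w : ℝ) (_hz₀ : 0 < z₀) (hw : 0 ≤ w)
    (heq : ∫⁻ z in Set.Ioo 0 z₀, ENNReal.ofReal (w / (1 + z*w)) =
      ENNReal.ofReal (Real.log (1 + z₀*w))) :
    (∫⁻ z in Set.Ioo 0 z₀, ENNReal.ofReal z⁻¹ * ENNReal.ofReal (1 - Real.exp (-(z*w))))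
      ≤ 2 * ENNReal.ofReal (Real.log (1 + z₀*w)) := by
  have step : (∫⁻ z in Set.Ioo 0 z₀, ENNReal.ofReal z⁻¹ * ENNReal.ofReal (1 - Real.exp (-(z*w))))
      ≤ ∫⁻ z in Set.Ioo 0 z₀, 2 * ENNReal.ofReal (w / (1 + z*w)) := by
    refine lintegral_mono_ae ((ae_restrict_iff' measurableSet_Ioo).2
      (Filter.Eventually.of_forall fun z hz => ?_))
    rw [← ENNReal.ofReal_mul (inv_nonneg.2 hz.1.le)]
    calc ENNReal.ofReal (z⁻¹ * (1 - Real.exp (-(z*w))))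
        ≤ ENNReal.ofReal (2 * (w / (1 + z*w))) :=
          ENNReal.ofReal_le_ofReal (aux_sandwich_hi z w hz.1 hw)
      _ = 2 * ENNReal.ofReal (w / (1 + z*w)) := by
          rw [ENNReal.ofReal_mul (by norm_num : (0:ℝ) ≤ 2)]; norm_num
  calc _ ≤ _ := step
    _ = 2 * ∫⁻ z in Set.Ioo 0 z₀, ENNReal.ofReal (w / (1 + z*w)) :=
        lintegral_const_mul' _ _ (by norm_num)
    _ = 2 * ENNReal.ofReal (Real.log (1 + z₀*w)) := by rw [heq]

lemma aux_inner_eq (z₀ w : ℝ) (hz₀ : 0 < z₀) (hw : 0 ≤ w) :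
    ∫⁻ z in Set.Ioo 0 z₀, ENNReal.ofReal (w / (1 + z*w)) =
      ENNReal.ofReal (Real.log (1 + z₀*w)) := by
  have hcont : ContinuousOn (fun z : ℝ => w / (1 + z*w)) (Set.Icc 0 z₀) := by
    apply ContinuousOn.div continuousOn_const (by fun_prop)
    intro z hz
    nlinarith [hz.1, mul_nonneg hz.1 hw]
  have hint : IntegrableOn (fun z : ℝ => w / (1 + z*w)) (Set.Ioo 0 z₀) := by
    exact (hcont.integrableOn_Icc).mono_set Set.Ioo_subset_Icc_self
  have hnn : 0 ≤ᵐ[volume.restrict (Set.Ioo 0 z₀)] (fun z : ℝ => w / (1 + z*w)) := by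
    refine (ae_restrict_iff' measurableSet_Ioo).2 (Filter.Eventually.of_forall fun z hz => ?_)
    have : (0:ℝ) < 1 + z*w := by nlinarith [hz.1, mul_nonneg hz.1.le hw]
    positivity
  rw [← ofReal_integral_eq_lintegral_ofReal hint hnn]
  congr 1
  have h1 : ∫ z in Set.Ioo 0 z₀, w / (1 + z*w) = ∫ z in (0:ℝ)..z₀, w / (1 + z*w) := by
    rw [intervalIntegral.integral_of_le hz₀.le, MeasureTheory.integral_Ioc_eq_integral_Ioo]
  rw [h1]
  have h2 : ∫ z in (0:ℝ)..z₀, w / (1 + z*w)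
      = Real.log (1 + z₀*w) - Real.log (1 + 0*w) := by
    apply intervalIntegral.integral_eq_sub_of_hasDerivAt
    · intro z hz
      rw [Set.uIcc_of_le hz₀.le] at hz
      have hpos : (0:ℝ) < 1 + z*w := by nlinarith [hz.1, mul_nonneg hz.1 hw]
      have hinner : HasDerivAt (fun z : ℝ => 1 + z*w) w z := by
        simpa using ((hasDerivAt_id z).mul_const w).const_add 1
      have := (Real.hasDerivAt_log hpos.ne').comp z hinner
      convert this using 1
      exacts [rfl, rfl, by ring]
    · apply ContinuousOn.intervalIntegrable
      rw [Set.uIcc_of_le hz₀.le]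
      exact hcont
  rw [h2]
  simp

-- log a ≤ log b + log M when 1 ≤ a, 1 ≤ b?, a ≤ b*M, 1 ≤ M, 0 < b
lemma aux_log_le (a b M : ℝ) (ha : 0 < a) (hb : 0 < b) (hM : 0 < M) (h : a ≤ b * M) :
    Real.log a ≤ Real.log b + Real.log M := by
  calc Real.log a ≤ Real.log (b*M) := Real.log_le_log ha h
    _ = Real.log b + Real.log M := Real.log_mul hb.ne' hM.ne'

-- comparisons in ENNReal
lemma aux_cmp1 (z₀ w : ℝ) (hz₀ : 0 < z₀) (hw : 0 ≤ w) :
    ENNReal.ofReal (Real.log (1 + w)) ≤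
      ENNReal.ofReal (Real.log (1 + z₀*w)) + ENNReal.ofReal (Real.log (max 1 z₀⁻¹)) := by
  have hM : (0:ℝ) < max 1 z₀⁻¹ := lt_max_of_lt_left one_pos
  have hb : (0:ℝ) < 1 + z₀*w := by nlinarith
  have h : 1 + w ≤ (1 + z₀*w) * max 1 z₀⁻¹ := by
    rcases le_total z₀⁻¹ 1 with h1 | h1
    · rw [max_eq_left h1]
      have : 1 ≤ z₀ := by
        have := (inv_le_one_iff₀).1 h1
        rcases this with h | h
        · linarith
        · exact h
      nlinarith
    · rw [max_eq_right h1]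
      have hz : z₀ ≤ 1 := by
        have := (one_le_inv_iff₀).1 h1
        exact this.2
      have : (1 + z₀*w) * z₀⁻¹ = z₀⁻¹ + w := by field_simp
      rw [this]
      linarith
  calc ENNReal.ofReal (Real.log (1 + w))
      ≤ ENNReal.ofReal (Real.log (1 + z₀*w) + Real.log (max 1 z₀⁻¹)) :=
        ENNReal.ofReal_le_ofReal (aux_log_le _ _ _ (by linarith) hb hM h)
    _ ≤ _ := ENNReal.ofReal_add_le

lemma aux_cmp2 (z₀ w : ℝ) (hz₀ : 0 < z₀) (hw : 0 ≤ w) :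
    ENNReal.ofReal (Real.log (1 + z₀*w)) ≤
      ENNReal.ofReal (Real.log (1 + w)) + ENNReal.ofReal (Real.log (max 1 z₀)) := by
  have hM : (0:ℝ) < max 1 z₀ := lt_max_of_lt_left one_pos
  have hb : (0:ℝ) < 1 + w := by linarith
  have h : 1 + z₀*w ≤ (1 + w) * max 1 z₀ := by
    have h1 : (1:ℝ) ≤ max 1 z₀ := le_max_left _ _
    have h2 : z₀ ≤ max 1 z₀ := le_max_right _ _
    nlinarith
  calc ENNReal.ofReal (Real.log (1 + z₀*w))
      ≤ ENNReal.ofReal (Real.log (1 + w) + Real.log (max 1 z₀)) :=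
        ENNReal.ofReal_le_ofReal (aux_log_le _ _ _ (by nlinarith) hb hM h)
    _ ≤ _ := ENNReal.ofReal_add_le

/-- Integral test for subcritical immigration (particle setting):
`∫_0^{z₀} z⁻¹ ∫ (1 - e^{-zW}) dP dz < ∞ ↔ ∫ log(1 + W) dP < ∞`. -/
theorem integral_test_iff_log_moment {Ω : Type*} [MeasurableSpace Ω]
    (P : Measure Ω) [IsProbabilityMeasure P]
    (W : Ω → ℝ) (hW : Measurable W) (hWnn : ∀ ω, 0 ≤ W ω)
    (z₀ : ℝ) (hz₀ : 0 < z₀) :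
    (∫⁻ z in Set.Ioo (0:ℝ) z₀,
        ENNReal.ofReal z⁻¹ * ∫⁻ ω, ENNReal.ofReal (1 - Real.exp (-(z * W ω))) ∂P) < ⊤ ↔
      (∫⁻ ω, ENNReal.ofReal (Real.log (1 + W ω)) ∂P) < ⊤ := by
  have hmeas : AEMeasurable
      (fun p : ℝ × Ω => ENNReal.ofReal p.1⁻¹ * ENNReal.ofReal (1 - Real.exp (-(p.1 * W p.2))))
      ((volume.restrict (Set.Ioo (0:ℝ) z₀)).prod P) := by
    apply Measurable.aemeasurable
    refine Measurable.mul (f := fun p : ℝ × Ω => ENNReal.ofReal p.1⁻¹)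
      (g := fun p : ℝ × Ω => ENNReal.ofReal (1 - Real.exp (-(p.1 * W p.2)))) ?_ ?_
    · exact measurable_fst.inv.ennreal_ofReal
    · exact ((((measurable_fst.mul (hW.comp measurable_snd)).neg).exp).const_sub 1).ennreal_ofReal
  have hswap : (∫⁻ z in Set.Ioo (0:ℝ) z₀,
        ENNReal.ofReal z⁻¹ * ∫⁻ ω, ENNReal.ofReal (1 - Real.exp (-(z * W ω))) ∂P)
      = ∫⁻ ω, (∫⁻ z in Set.Ioo (0:ℝ) z₀,
          ENNReal.ofReal z⁻¹ * ENNReal.ofReal (1 - Real.exp (-(z * W ω)))) ∂P := by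
    calc (∫⁻ z in Set.Ioo (0:ℝ) z₀,
          ENNReal.ofReal z⁻¹ * ∫⁻ ω, ENNReal.ofReal (1 - Real.exp (-(z * W ω))) ∂P)
        = ∫⁻ z in Set.Ioo (0:ℝ) z₀,
            ∫⁻ ω, ENNReal.ofReal z⁻¹ * ENNReal.ofReal (1 - Real.exp (-(z * W ω))) ∂P :=
          lintegral_congr fun z => (lintegral_const_mul' _ _ ENNReal.ofReal_ne_top).symm
      _ = _ := lintegral_lintegral_swap hmeas
  rw [hswap]
  have hheq : ∀ ω : Ω, ∫⁻ z in Set.Ioo 0 z₀, ENNReal.ofReal (W ω / (1 + z * W ω)) =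
      ENNReal.ofReal (Real.log (1 + z₀ * W ω)) :=
    fun ω => aux_inner_eq z₀ (W ω) hz₀ (hWnn ω)
  constructor
  · intro h
    have hle : ∀ ω, ENNReal.ofReal (Real.log (1 + W ω)) ≤
        (∫⁻ z in Set.Ioo (0:ℝ) z₀,
          ENNReal.ofReal z⁻¹ * ENNReal.ofReal (1 - Real.exp (-(z * W ω))))
        + ENNReal.ofReal (Real.log (max 1 z₀⁻¹)) := fun ω =>
      le_trans (aux_cmp1 z₀ (W ω) hz₀ (hWnn ω))
        (add_le_add_left (aux_inner_lo z₀ (W ω) hz₀ (hWnn ω) (hheq ω)) _)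
    calc (∫⁻ ω, ENNReal.ofReal (Real.log (1 + W ω)) ∂P)
        ≤ ∫⁻ ω, ((∫⁻ z in Set.Ioo (0:ℝ) z₀,
            ENNReal.ofReal z⁻¹ * ENNReal.ofReal (1 - Real.exp (-(z * W ω))))
            + ENNReal.ofReal (Real.log (max 1 z₀⁻¹))) ∂P := lintegral_mono hle
      _ = (∫⁻ ω, (∫⁻ z in Set.Ioo (0:ℝ) z₀,
            ENNReal.ofReal z⁻¹ * ENNReal.ofReal (1 - Real.exp (-(z * W ω)))) ∂P)
            + ENNReal.ofReal (Real.log (max 1 z₀⁻¹)) * P Set.univ := by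
          rw [lintegral_add_right _ measurable_const, lintegral_const]
      _ < ⊤ := by
          apply ENNReal.add_lt_top.2
          exact ⟨h, ENNReal.mul_lt_top ENNReal.ofReal_lt_top (measure_lt_top P _)⟩
  · intro h
    have hle : ∀ ω, (∫⁻ z in Set.Ioo (0:ℝ) z₀,
          ENNReal.ofReal z⁻¹ * ENNReal.ofReal (1 - Real.exp (-(z * W ω))))
        ≤ 2 * (ENNReal.ofReal (Real.log (1 + W ω)) + ENNReal.ofReal (Real.log (max 1 z₀))) :=
      fun ω => le_trans (aux_inner_hi z₀ (W ω) hz₀ (hWnn ω) (hheq ω))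
        (mul_le_mul_right (aux_cmp2 z₀ (W ω) hz₀ (hWnn ω)) 2)
    calc (∫⁻ ω, (∫⁻ z in Set.Ioo (0:ℝ) z₀,
            ENNReal.ofReal z⁻¹ * ENNReal.ofReal (1 - Real.exp (-(z * W ω)))) ∂P)
        ≤ ∫⁻ ω, 2 * (ENNReal.ofReal (Real.log (1 + W ω))
            + ENNReal.ofReal (Real.log (max 1 z₀))) ∂P := lintegral_mono hle
      _ = 2 * ((∫⁻ ω, ENNReal.ofReal (Real.log (1 + W ω)) ∂P)
            + ENNReal.ofReal (Real.log (max 1 z₀)) * P Set.univ) := by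
          rw [lintegral_const_mul' _ _ (by norm_num), lintegral_add_right _ measurable_const,
            lintegral_const]
      _ < ⊤ := by
          apply ENNReal.mul_lt_top (by norm_num)
          exact ENNReal.add_lt_top.2
            ⟨h, ENNReal.mul_lt_top ENNReal.ofReal_lt_top (measure_lt_top P _)⟩
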